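/- arXiv:2303.12703 — 3 statements merged into one kernel-verified Lean document; each statement's English description precedes it below -/
import Mathlib

section
/- Let D ≥ 1 and let A be a D × D real matrix with all entries nonnegative. Then trace(exp(A)) = D if and only if the support digraph of A contains no closed walk; that is, if and only if there is no k ≥ 1 and no sequence of indices i₀, i₁, …, i_k with i₀ = i_k and A i_l i_{l+1} > 0 for every 0 ≤ l < k. -/
open scoped Matrix

attribute [local instance] Matrix.linftyOpNormedAddCommGroup Matrix.linftyOpNormedRing
  Matrix.linftyOpNormedAlgebra

namespace TraceExpAux

variable {D : ℕ} (A : Matrix (Fin D) (Fin D) ℝ)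

lemma pow_nonneg (hA : ∀ i j, 0 ≤ A i j) : ∀ (n : ℕ) (i j : Fin D), 0 ≤ (A ^ n) i j := by
  intro n
  induction n with
  | zero =>
    intro i j
    simp only [pow_zero, Matrix.one_apply]
    split <;> norm_num
  | succ n ih =>
    intro i j
    rw [pow_succ, Matrix.mul_apply]
    exact Finset.sum_nonneg fun m _ => mul_nonneg (ih i m) (hA m j)

lemma pow_pos_of_walk (hA : ∀ i j, 0 ≤ A i j) :
    ∀ (k : ℕ) (f : ℕ → Fin D), (∀ l < k + 1, 0 < A (f l) (f (l + 1))) →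
      0 < (A ^ (k + 1)) (f 0) (f (k + 1)) := by
  intro k
  induction k with
  | zero =>
    intro f hf
    simpa using hf 0 (by norm_num)
  | succ k ih =>
    intro f hf
    rw [pow_succ, Matrix.mul_apply]
    have h1 : 0 < (A ^ (k + 1)) (f 0) (f (k + 1)) :=
      ih f fun l hl => hf l (by omega)
    have h2 : 0 < A (f (k + 1)) (f (k + 2)) := hf (k + 1) (by omega)
    refine Finset.sum_pos' (fun m _ => mul_nonneg (pow_nonneg A hA _ _ _) (hA _ _)) ?_
    exact ⟨f (k + 1), Finset.mem_univ _, mul_pos h1 h2⟩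

lemma walk_of_pow_pos (hA : ∀ i j, 0 ≤ A i j) :
    ∀ (k : ℕ) (i j : Fin D), 0 < (A ^ (k + 1)) i j →
      ∃ f : ℕ → Fin D, f 0 = i ∧ f (k + 1) = j ∧ ∀ l < k + 1, 0 < A (f l) (f (l + 1)) := by
  intro k
  induction k with
  | zero =>
    intro i j h
    rw [zero_add, pow_one] at h
    refine ⟨fun n => if n = 0 then i else j, rfl, rfl, ?_⟩
    intro l hl
    interval_cases l
    exact h
  | succ k ih =>
    intro i j h
    rw [pow_succ', Matrix.mul_apply] at h
    have hex : ∃ m, 0 < A i m * (A ^ (k + 1)) m j := by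
      by_contra hc
      push_neg at hc
      have : (∑ m, A i m * (A ^ (k + 1)) m j) ≤ 0 :=
        Finset.sum_nonpos fun m _ => hc m
      linarith
    obtain ⟨m, hm⟩ := hex
    have h1 : 0 < A i m := by
      rcases (hA i m).lt_or_eq with h' | h'
      · exact h'
      · rw [← h', zero_mul] at hm; exact absurd hm (lt_irrefl 0)
    have h2 : 0 < (A ^ (k + 1)) m j := by
      rcases (pow_nonneg A hA (k + 1) m j).lt_or_eq with h' | h'
      · exact h'
      · rw [← h', mul_zero] at hm; exact absurd hm (lt_irrefl 0)
    obtain ⟨f, hf0, hfk, hfw⟩ := ih m j h2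
    refine ⟨fun n => if n = 0 then i else f (n - 1), rfl, by simpa using hfk, ?_⟩
    intro l hl
    rcases Nat.eq_zero_or_pos l with rfl | hlp
    · simpa [hf0] using h1
    · have h3 : l ≠ 0 := hlp.ne'
      have h4 : l + 1 ≠ 0 := by omega
      obtain ⟨t, rfl⟩ : ∃ t, l = t + 1 := ⟨l - 1, by omega⟩
      simp only [h3, h4, if_neg, if_false, Nat.add_sub_cancel]
      exact hfw t (by omega)

end TraceExpAux

/-- For a `D × D` nonnegative real matrix `A`, `trace (exp A) = D` if and only if the
support digraph of `A` contains no closed walk. -/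
theorem trace_exp_eq_iff_no_closed_walk
    (D : ℕ) (hD : 1 ≤ D) (A : Matrix (Fin D) (Fin D) ℝ)
    (hA : ∀ i j, 0 ≤ A i j) :
    (NormedSpace.exp A).trace = D ↔
      ¬ ∃ (k : ℕ) (i : ℕ → Fin D), 1 ≤ k ∧ i 0 = i k ∧
        ∀ l < k, 0 < A (i l) (i (l + 1)) := by
  classical
  -- trace of the exponential as a tsum
  set T : Matrix (Fin D) (Fin D) ℝ →L[ℝ] ℝ :=
    LinearMap.toContinuousLinearMap (Matrix.traceLinearMap (Fin D) ℝ ℝ) with hT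
  have hsum : Summable fun n : ℕ => (((Nat.factorial n : ℝ))⁻¹) • A ^ n :=
    NormedSpace.expSeries_summable' (𝕂 := ℝ) A
  have hTr : ∀ M : Matrix (Fin D) (Fin D) ℝ, T M = M.trace := fun M => rfl
  set g : ℕ → ℝ := fun n => (((Nat.factorial n : ℝ))⁻¹) * (A ^ n).trace with hg
  have hgsum : Summable g := by
    have := hsum.map T T.continuous
    convert this using 1
    funext n
    simp [hg, hTr, Matrix.trace_smul, smul_eq_mul]
  have hexp : (NormedSpace.exp A).trace = ∑' n : ℕ, g n := by
    rw [NormedSpace.exp_eq_tsum (𝕂 := ℝ)]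
    rw [← hTr, T.map_tsum hsum]
    congr 1
    funext n
    simp [hg, hTr, Matrix.trace_smul, smul_eq_mul]
  have hg0 : g 0 = D := by
    simp [hg, Matrix.trace_one]
  have hgnonneg : ∀ n, 0 ≤ g n := by
    intro n
    refine mul_nonneg (by positivity) ?_
    exact Finset.sum_nonneg fun i _ => TraceExpAux.pow_nonneg A hA n i i
  have hsum' : Summable fun n => g (n + 1) := (summable_nat_add_iff 1).2 hgsum
  have hsplit : (∑' n : ℕ, g n) = g 0 + ∑' n : ℕ, g (n + 1) := hgsum.tsum_eq_zero_add
  -- reduce to vanishing of the tail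
  have key : (NormedSpace.exp A).trace = D ↔ ∀ n : ℕ, (A ^ (n + 1)).trace = 0 := by
    rw [hexp, hsplit, hg0]
    constructor
    · intro h n
      have htail : (∑' n : ℕ, g (n + 1)) = 0 := by linarith
      have hle : g (n + 1) ≤ ∑' n : ℕ, g (n + 1) :=
        hsum'.le_tsum n fun j _ => hgnonneg (j + 1)
      have : g (n + 1) = 0 := le_antisymm (htail ▸ hle) (hgnonneg (n + 1))
      have hfac : ((Nat.factorial (n+1) : ℝ))⁻¹ ≠ 0 := by positivity
      exact (mul_eq_zero.mp this).resolve_left hfac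
    · intro h
      have : (∑' n : ℕ, g (n + 1)) = 0 := by
        have : (fun n => g (n + 1)) = fun _ => (0 : ℝ) := by
          funext n; simp [hg, h n]
        rw [this, tsum_zero]
      rw [this, add_zero]
  rw [key]
  constructor
  · rintro h ⟨k, i, hk, hcl, hw⟩
    obtain ⟨k, rfl⟩ : ∃ k', k = k' + 1 := ⟨k - 1, by omega⟩
    have hpos : 0 < (A ^ (k + 1)) (i 0) (i (k + 1)) :=
      TraceExpAux.pow_pos_of_walk A hA k i hw
    rw [hcl] at hpos
    have : 0 < (A ^ (k + 1)).trace := by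
      refine Finset.sum_pos' (fun m _ => TraceExpAux.pow_nonneg A hA _ m m) ?_
      exact ⟨i (k + 1), Finset.mem_univ _, hpos⟩
    rw [h k] at this
    exact absurd this (lt_irrefl 0)
  · intro h n
    refine le_antisymm ?_ (Finset.sum_nonneg fun m _ => TraceExpAux.pow_nonneg A hA _ m m)
    by_contra hc
    push_neg at hc
    have : ∃ m : Fin D, 0 < (A ^ (n + 1)) m m := by
      by_contra hc'
      push_neg at hc'
      have : (A ^ (n + 1)).trace ≤ 0 := Finset.sum_nonpos fun m _ => hc' m
      linarith
    obtain ⟨m, hm⟩ := this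
    obtain ⟨f, hf0, hfk, hfw⟩ := TraceExpAux.walk_of_pow_pos A hA n m m hm
    exact h ⟨n + 1, f, by omega, by rw [hf0, hfk], hfw⟩
end

section
/- Let D ≥ 1 and let G_D and G_B be D × D real matrices each of whose entries lies in {0, 1}. Define the bow-free penalty h(G_D, G_B) = trace(exp(G_D)) − D + Σ_{i,j} (G_D)_{ij} · (G_B)_{ij}. Then h(G_D, G_B) ≥ 0, and h(G_D, G_B) = 0 if and only if both (i) the support digraph of G_D contains no closed walk (there is no k ≥ 1 and sequence i₀, …, i_k with i₀ = i_k and (G_D) i_l i_{l+1} = 1 for all 0 ≤ l < k), and (ii) for every pair (i, j), (G_D)_{ij} · (G_B)_{ij} = 0. -/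
open scoped BigOperators Nat

namespace BowFreeAux

variable {D : ℕ} (GD : Matrix (Fin D) (Fin D) ℝ)

lemma pow_entry_nonneg (h : ∀ i j, 0 ≤ GD i j) :
    ∀ (k : ℕ) (i j : Fin D), 0 ≤ (GD ^ k) i j := by
  intro k
  induction k with
  | zero =>
    intro i j
    rw [pow_zero]
    by_cases hij : i = j <;> simp [Matrix.one_apply, hij]
  | succ k ih =>
    intro i j
    rw [pow_succ, Matrix.mul_apply]
    exact Finset.sum_nonneg fun m _ => mul_nonneg (ih i m) (h m j)

lemma one_le_pow_entry (h : ∀ i j, 0 ≤ GD i j)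
    (p : ℕ → Fin D) (k : ℕ) (hp : ∀ l < k, GD (p l) (p (l+1)) = 1) :
    1 ≤ (GD ^ k) (p 0) (p k) := by
  induction k with
  | zero => simp [Matrix.one_apply]
  | succ k ih =>
    have hk : 1 ≤ (GD ^ k) (p 0) (p k) := ih (fun l hl => hp l (Nat.lt_succ_of_lt hl))
    rw [pow_succ, Matrix.mul_apply]
    have hle : (GD ^ k) (p 0) (p k) * GD (p k) (p (k+1)) ≤
        ∑ m, (GD ^ k) (p 0) m * GD m (p (k+1)) :=
      Finset.single_le_sum (f := fun m => (GD ^ k) (p 0) m * GD m (p (k+1)))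
        (fun m _ => mul_nonneg (pow_entry_nonneg GD h k _ m) (h m _)) (Finset.mem_univ _)
    calc (1:ℝ) = 1 * 1 := by ring
    _ ≤ (GD ^ k) (p 0) (p k) * GD (p k) (p (k+1)) := by
        rw [hp k (Nat.lt_succ_self k)]; simpa using hk
    _ ≤ _ := hle

lemma exists_walk_of_pos (h : ∀ i j, GD i j = 0 ∨ GD i j = 1) :
    ∀ (k : ℕ) (i j : Fin D), 0 < (GD ^ k) i j →
      ∃ p : ℕ → Fin D, p 0 = i ∧ p k = j ∧ ∀ l < k, GD (p l) (p (l+1)) = 1 := by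
  have h0 : ∀ i j, 0 ≤ GD i j := fun i j => by rcases h i j with h'|h' <;> simp [h']
  intro k
  induction k with
  | zero =>
    intro i j hij
    have hij' : i = j := by
      by_contra hne
      rw [pow_zero, Matrix.one_apply_ne hne] at hij
      exact lt_irrefl 0 hij
    exact ⟨fun _ => i, rfl, hij'.symm ▸ rfl, by simp⟩
  | succ k ih =>
    intro i j hij
    rw [pow_succ, Matrix.mul_apply] at hij
    have hex : ∃ m, 0 < (GD ^ k) i m * GD m j := by
      by_contra hno
      push_neg at hno
      have : ∑ m, (GD ^ k) i m * GD m j ≤ 0 := Finset.sum_nonpos fun m _ => hno m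
      linarith
    obtain ⟨m, hm⟩ := hex
    have ha : 0 < (GD ^ k) i m := by
      rcases (pow_entry_nonneg GD h0 k i m).lt_or_eq with h'|h'
      · exact h'
      · rw [← h'] at hm; simp at hm
    have hb : GD m j = 1 := by
      rcases h m j with h'|h'
      · rw [h'] at hm; simp at hm
      · exact h'
    obtain ⟨p, hp0, hpk, hpe⟩ := ih i m ha
    refine ⟨fun l => if l = k + 1 then j else p l, by simp [hp0], by simp, ?_⟩
    intro l hl
    rcases Nat.lt_succ_iff_lt_or_eq.mp hl with hl'|hl'
    · have h1 : l ≠ k + 1 := by omega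
      have h2 : l + 1 ≠ k + 1 := by omega
      simpa [h1, h2, show l ≠ k by omega] using hpe l hl'
    · subst hl'
      have h1 : l ≠ l + 1 := by omega
      simpa [h1, hpk] using hb

lemma hasSum_trace_exp (A : Matrix (Fin D) (Fin D) ℝ) :
    HasSum (fun n : ℕ => ((n ! : ℝ)⁻¹) * (A ^ n).trace) (NormedSpace.exp A).trace := by
  letI : NormedRing (Matrix (Fin D) (Fin D) ℝ) := Matrix.linftyOpNormedRing
  letI : NormedAlgebra ℝ (Matrix (Fin D) (Fin D) ℝ) := Matrix.linftyOpNormedAlgebra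
  have hs : Summable fun n : ℕ => ((n ! : ℝ)⁻¹) • A ^ n := NormedSpace.expSeries_summable' A
  have hmap := hs.hasSum.mapL (Matrix.traceLinearMap (Fin D) ℝ ℝ).toContinuousLinearMap
  have hexp : NormedSpace.exp A = ∑' n : ℕ, ((n ! : ℝ)⁻¹) • A ^ n := by
    rw [NormedSpace.exp_eq_tsum (𝕂 := ℝ)]
  rw [hexp]
  convert hmap using 2 with n
  case e'_3 => rfl
  case e'_6 => rfl
  simp [Matrix.trace_smul, smul_eq_mul]

end BowFreeAux

open scoped Nat in
open BowFreeAux in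
/-- The bow-free penalty `h(G_D, G_B) = trace (exp G_D) - D + ∑ᵢⱼ (G_D)ᵢⱼ (G_B)ᵢⱼ` of two
binary `D × D` matrices is nonnegative, and vanishes exactly when `G_D` has no closed walk
and no pair of nodes carries both a directed and a bidirected edge. -/
theorem bow_free_penalty_nonneg_and_eq_zero_iff
    (D : ℕ) (hD : 1 ≤ D) (GD GB : Matrix (Fin D) (Fin D) ℝ)
    (hGD : ∀ i j, GD i j = 0 ∨ GD i j = 1)
    (hGB : ∀ i j, GB i j = 0 ∨ GB i j = 1) :
    0 ≤ (NormedSpace.exp GD).trace - D + ∑ i, ∑ j, GD i j * GB i j ∧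
    ((NormedSpace.exp GD).trace - D + ∑ i, ∑ j, GD i j * GB i j = 0 ↔
      ((¬ ∃ (k : ℕ) (p : ℕ → Fin D), 1 ≤ k ∧ p 0 = p k ∧
          ∀ l < k, GD (p l) (p (l + 1)) = 1) ∧
        ∀ i j, GD i j * GB i j = 0)) := by
  have h0 : ∀ i j, 0 ≤ GD i j := fun i j => by rcases hGD i j with h'|h' <;> simp [h']
  set g : ℕ → ℝ := fun n => ((n ! : ℝ)⁻¹) * (GD ^ n).trace with hg_def
  have hg : HasSum g (NormedSpace.exp GD).trace := hasSum_trace_exp GD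
  have hg0 : g 0 = D := by
    simp [hg_def, Matrix.trace_one]
  -- nonnegativity of each g n
  have hgnn : ∀ n, 0 ≤ g n := by
    intro n
    apply mul_nonneg (by positivity)
    exact Finset.sum_nonneg fun i _ => pow_entry_nonneg GD h0 n i i
  -- shifted sum
  have hg' : HasSum (fun n => g (n + 1)) ((NormedSpace.exp GD).trace - D) := by
    have := (hasSum_nat_add_iff' (f := g) 1).mpr hg
    simpa [hg0] using this
  have hTnn : 0 ≤ (NormedSpace.exp GD).trace - D :=
    hasSum_le (fun n => hgnn (n + 1)) hasSum_zero hg'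
  -- sum term nonneg
  have hSterm : ∀ i j, 0 ≤ GD i j * GB i j := fun i j =>
    mul_nonneg (h0 i j) (by rcases hGB i j with h'|h' <;> simp [h'])
  have hSnn : 0 ≤ ∑ i, ∑ j, GD i j * GB i j :=
    Finset.sum_nonneg fun i _ => Finset.sum_nonneg fun j _ => hSterm i j
  refine ⟨by linarith, ?_⟩
  constructor
  · intro hzero
    have hT0 : (NormedSpace.exp GD).trace - D = 0 := by linarith
    have hS0 : ∑ i, ∑ j, GD i j * GB i j = 0 := by linarith
    constructor
    · rintro ⟨k, p, hk, hcyc, hedges⟩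
      obtain ⟨n, rfl⟩ : ∃ n, k = n + 1 := ⟨k - 1, by omega⟩
      -- g (n+1) > 0
      have h1 : (1:ℝ) ≤ (GD ^ (n+1)) (p 0) (p (n+1)) := one_le_pow_entry GD h0 p (n+1) hedges
      rw [← hcyc] at h1
      have htr : (1:ℝ) ≤ (GD ^ (n+1)).trace := by
        refine le_trans h1 ?_
        exact Finset.single_le_sum (f := fun i => (GD ^ (n+1)) i i)
          (fun i _ => pow_entry_nonneg GD h0 (n+1) i i) (Finset.mem_univ (p 0))
      have hpos : 0 < g (n + 1) := by
        have : (0:ℝ) < ((n+1)! : ℝ)⁻¹ := by positivity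
        exact mul_pos this (by linarith)
      have hle : g (n + 1) ≤ (NormedSpace.exp GD).trace - D :=
        le_hasSum hg' n (fun m _ => hgnn (m + 1))
      linarith
    · intro i j
      have := (Finset.sum_eq_zero_iff_of_nonneg
        (fun i (_ : i ∈ Finset.univ) => Finset.sum_nonneg fun j _ => hSterm i j)).mp hS0
          i (Finset.mem_univ i)
      exact (Finset.sum_eq_zero_iff_of_nonneg
        (fun j (_ : j ∈ Finset.univ) => hSterm i j)).mp this j (Finset.mem_univ j)
  · rintro ⟨hnowalk, hbow⟩
    have hS0 : ∑ i, ∑ j, GD i j * GB i j = 0 :=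
      Finset.sum_eq_zero fun i _ => Finset.sum_eq_zero fun j _ => hbow i j
    have hgz : ∀ n, g (n + 1) = 0 := by
      intro n
      rcases (hgnn (n+1)).lt_or_eq with hpos|heq
      · exfalso
        have htr : 0 < (GD ^ (n+1)).trace := by
          by_contra hle
          push_neg at hle
          have : (GD ^ (n+1)).trace = 0 := le_antisymm hle
            (Finset.sum_nonneg fun i _ => pow_entry_nonneg GD h0 (n+1) i i)
          rw [hg_def] at hpos
          simp only [this, mul_zero] at hpos
          exact lt_irrefl 0 hpos
        have hex : ∃ i : Fin D, 0 < (GD ^ (n+1)) i i := by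
          by_contra hno
          push_neg at hno
          have : (GD ^ (n+1)).trace ≤ 0 := Finset.sum_nonpos fun i _ => hno i
          linarith
        obtain ⟨i, hi⟩ := hex
        obtain ⟨p, hp0, hpk, hpe⟩ := exists_walk_of_pos GD hGD (n+1) i i hi
        exact hnowalk ⟨n + 1, p, by omega, by rw [hp0, hpk], hpe⟩
      · exact heq.symm
    have : HasSum (fun n => g (n + 1)) 0 := by
      have : (fun n => g (n + 1)) = fun _ => (0:ℝ) := funext hgz
      rw [this]; exact hasSum_zero
    have hT0 : (NormedSpace.exp GD).trace - D = 0 := hg'.unique this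
    linarith
end

section
/- Let (Ω, ℱ, P) be a probability space and let u₂, η₁, ε_i, ε_j, ε_k : Ω → ℝ be measurable random variables that are (jointly) independent as a family. Let f₂₁, f₁ᵢ, f₂ⱼ, f₂ₖ be real constants with f₂ⱼ ≠ 0. Define u₁ = f₂₁·u₂ + η₁, x_i = f₁ᵢ·u₁ + ε_i, x_j = f₂ⱼ·u₂ + ε_j, and x_k = f₂ₖ·u₂ + ε_k. Then, with g = f₁ᵢ·f₂₁ / f₂ⱼ, the random variable x_i − g·x_j is independent of x_k. -/
open MeasureTheory ProbabilityTheory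

/-- In the linear SEM `u₁ = f₂₁ u₂ + η₁`, `x_i = f₁ᵢ u₁ + ε_i`, `x_j = f₂ⱼ u₂ + ε_j`,
`x_k = f₂ₖ u₂ + ε_k` with jointly independent `u₂, η₁, ε_i, ε_j, ε_k`, the residual
`x_i - (f₁ᵢ f₂₁ / f₂ⱼ) x_j` is independent of `x_k`. -/
theorem triad_constraint_linear
    {Ω : Type*} [MeasurableSpace Ω] (P : Measure Ω) [IsProbabilityMeasure P]
    (u₂ η₁ εi εj εk : Ω → ℝ)
    (hu₂ : Measurable u₂) (hη₁ : Measurable η₁) (hεi : Measurable εi)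
    (hεj : Measurable εj) (hεk : Measurable εk)
    (hindep : iIndepFun ![u₂, η₁, εi, εj, εk] P)
    (f₂₁ f₁i f₂j f₂k : ℝ) (hf₂j : f₂j ≠ 0) :
    IndepFun
      (fun ω => (f₁i * (f₂₁ * u₂ ω + η₁ ω) + εi ω)
        - (f₁i * f₂₁ / f₂j) * (f₂j * u₂ ω + εj ω))
      (fun ω => f₂k * u₂ ω + εk ω) P := by
  have hmeas : ∀ i, Measurable (![u₂, η₁, εi, εj, εk] i) := by
    intro i; fin_cases i <;> assumption
  classical
  set S : Finset (Fin 5) := {1, 2, 3} with hS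
  set T : Finset (Fin 5) := {0, 4} with hT
  have h1 : (1 : Fin 5) ∈ S := by decide
  have h2 : (2 : Fin 5) ∈ S := by decide
  have h3 : (3 : Fin 5) ∈ S := by decide
  have h0 : (0 : Fin 5) ∈ T := by decide
  have h4 : (4 : Fin 5) ∈ T := by decide
  have h := hindep.indepFun_finset S T (by decide) hmeas
  set φ : (∀ _ : S, ℝ) → ℝ :=
    fun v => f₁i * v ⟨1, h1⟩ + v ⟨2, h2⟩ - (f₁i * f₂₁ / f₂j) * v ⟨3, h3⟩ with hφ
  set ψ : (∀ _ : T, ℝ) → ℝ := fun v => f₂k * v ⟨0, h0⟩ + v ⟨4, h4⟩ with hψ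
  have hφm : Measurable φ := by fun_prop
  have hψm : Measurable ψ := by fun_prop
  have h' := h.comp hφm hψm
  have heq1 : (φ ∘ fun a (i : S) => ![u₂, η₁, εi, εj, εk] i a)
      = fun ω => (f₁i * (f₂₁ * u₂ ω + η₁ ω) + εi ω)
        - (f₁i * f₂₁ / f₂j) * (f₂j * u₂ ω + εj ω) := by
    funext ω
    simp only [Function.comp, hφ]
    simp [Matrix.cons_val_one, Matrix.head_cons]
    field_simp
    ring
  have heq2 : (ψ ∘ fun a (i : T) => ![u₂, η₁, εi, εj, εk] i a)
      = fun ω => f₂k * u₂ ω + εk ω := by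
    funext ω
    simp [hψ, Function.comp]
  rwa [heq1, heq2] at h'
end
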